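/- arXiv:1203.4183 — 6 statements merged into one kernel-verified Lean document; each statement's English description precedes it below -/
import Mathlib

section
/- Let λ > 0 and α > 0 be real numbers. Then for every real y with |y| ≤ λ/2, the sum over positive integers satisfies ∑_{k=1}^∞ exp(α(1 − (y + kλ)²)) ≤ exp(α − αλ²/4) · (2 − exp(−αλ²)) / (1 − exp(−αλ²)). (In particular the series on the left converges.) -/
/-- For λ > 0, α > 0 and |y| ≤ λ/2, the series
∑_{k=1}^∞ exp(α(1 − (y + kλ)²)) converges and is bounded by
exp(α − αλ²/4) · (2 − exp(−αλ²)) / (1 − exp(−αλ²)). -/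
theorem stmt_0 (lam α : ℝ) (hlam : 0 < lam) (hα : 0 < α)
    (y : ℝ) (hy : |y| ≤ lam / 2) :
    Summable (fun k : ℕ => Real.exp (α * (1 - (y + (k + 1 : ℝ) * lam) ^ 2))) ∧
    ∑' k : ℕ, Real.exp (α * (1 - (y + (k + 1 : ℝ) * lam) ^ 2)) ≤
      Real.exp (α - α * lam ^ 2 / 4) *
        (2 - Real.exp (-(α * lam ^ 2))) / (1 - Real.exp (-(α * lam ^ 2))) := by
  set q : ℝ := Real.exp (-(α * lam ^ 2)) with hq
  set C : ℝ := Real.exp (α - α * lam ^ 2 / 4) with hC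
  have hq0 : 0 < q := Real.exp_pos _
  have hC0 : 0 < C := Real.exp_pos _
  have hq1 : q < 1 := by
    rw [hq, Real.exp_lt_one_iff]
    have : 0 < α * lam ^ 2 := by positivity
    linarith
  have hy' : -(lam / 2) ≤ y := (abs_le.mp hy).1
  have hterm : ∀ k : ℕ, Real.exp (α * (1 - (y + (k + 1 : ℝ) * lam) ^ 2)) ≤ C * q ^ k := by
    intro k
    rw [hC, hq, ← Real.exp_nat_mul, ← Real.exp_add, Real.exp_le_exp]
    have hk : (0 : ℝ) ≤ (k : ℝ) := Nat.cast_nonneg k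
    have hs : ((k : ℝ) + 1 / 2) * lam ≤ y + (k + 1 : ℝ) * lam := by nlinarith
    have hs0 : (0 : ℝ) ≤ ((k : ℝ) + 1 / 2) * lam := by positivity
    have hsq : (((k : ℝ) + 1 / 2) * lam) ^ 2 ≤ (y + (k + 1 : ℝ) * lam) ^ 2 := by
      apply pow_le_pow_left₀ hs0 hs
    nlinarith [sq_nonneg ((k : ℝ) * lam), sq_nonneg lam, mul_pos hα (mul_pos hlam hlam),
      mul_nonneg (mul_nonneg hα.le hk) (sq_nonneg lam)]
  have hgeo : Summable (fun k : ℕ => C * q ^ k) :=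
    (summable_geometric_of_lt_one hq0.le hq1).mul_left C
  have hsum : Summable (fun k : ℕ => Real.exp (α * (1 - (y + (k + 1 : ℝ) * lam) ^ 2))) :=
    Summable.of_nonneg_of_le (fun k => (Real.exp_pos _).le) hterm hgeo
  refine ⟨hsum, ?_⟩
  calc ∑' k : ℕ, Real.exp (α * (1 - (y + (k + 1 : ℝ) * lam) ^ 2))
      ≤ ∑' k : ℕ, C * q ^ k := Summable.tsum_le_tsum hterm hsum hgeo
    _ = C * (1 - q)⁻¹ := by
        rw [tsum_mul_left, tsum_geometric_of_lt_one hq0.le hq1]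
    _ ≤ C * (2 - q) / (1 - q) := by
        rw [mul_comm C, ← div_eq_inv_mul, div_le_div_iff₀ (by linarith) (by linarith)]
        nlinarith [mul_nonneg hC0.le (sq_nonneg (1 - q))]
end

section
/- Let λ > 0 and α > 0 be real numbers. Then for every real y with |y| ≤ λ/2, the sum over negative integers satisfies ∑_{k=1}^∞ exp(α(1 − (y − kλ)²)) ≤ exp(α − αλ²/4) · (2 − exp(−αλ²)) / (1 − exp(−αλ²)). (In particular the series on the left converges.) -/
/-- For λ > 0, α > 0 and |y| ≤ λ/2, the series
∑_{k=1}^∞ exp(α(1 − (y − kλ)²)) converges and is bounded by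
exp(α − αλ²/4) · (2 − exp(−αλ²)) / (1 − exp(−αλ²)). -/
theorem stmt_1 (lam α : ℝ) (hlam : 0 < lam) (hα : 0 < α)
    (y : ℝ) (hy : |y| ≤ lam / 2) :
    Summable (fun k : ℕ => Real.exp (α * (1 - (y - (k + 1 : ℝ) * lam) ^ 2))) ∧
    ∑' k : ℕ, Real.exp (α * (1 - (y - (k + 1 : ℝ) * lam) ^ 2)) ≤
      Real.exp (α - α * lam ^ 2 / 4) *
        (2 - Real.exp (-(α * lam ^ 2))) / (1 - Real.exp (-(α * lam ^ 2))) := by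
  set r : ℝ := Real.exp (-(α * lam ^ 2)) with hr
  set C : ℝ := Real.exp (α - α * lam ^ 2 / 4) with hC
  have hr0 : 0 < r := Real.exp_pos _
  have hr1 : r < 1 := by
    rw [hr, Real.exp_lt_one_iff]
    have : 0 < α * lam ^ 2 := by positivity
    linarith
  have hC0 : 0 < C := Real.exp_pos _
  have hbound : ∀ k : ℕ, Real.exp (α * (1 - (y - (k + 1 : ℝ) * lam) ^ 2)) ≤ C * r ^ k := by
    intro k
    have hy1 : -(lam / 2) ≤ y := neg_le_of_abs_le hy
    have hy2 : y ≤ lam / 2 := le_of_abs_le hy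
    have h1 : lam * (k + 1 / 2) ≤ (k + 1 : ℝ) * lam - y := by
      have : (0:ℝ) ≤ (k:ℝ) * lam := by positivity
      nlinarith
    have h2 : (0:ℝ) ≤ lam * (k + 1 / 2) := by positivity
    have hsq : lam ^ 2 * (k + 1 / 2) ^ 2 ≤ (y - (k + 1 : ℝ) * lam) ^ 2 := by
      nlinarith [sq_nonneg (y - (k+1:ℝ)*lam)]
    have hk : (k : ℝ) + 1 / 4 ≤ ((k:ℝ) + 1 / 2) ^ 2 := by nlinarith [sq_nonneg (k:ℝ)]
    have : C * r ^ k = Real.exp (α - α * lam ^ 2 / 4 + k * (-(α * lam ^ 2))) := by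
      rw [Real.exp_add, Real.exp_nat_mul]
    rw [this]
    apply Real.exp_le_exp.2
    have hlam2 : (0:ℝ) < lam ^ 2 := by positivity
    nlinarith [mul_le_mul_of_nonneg_left hk (le_of_lt hlam2)]
  have hsumg : Summable (fun k : ℕ => C * r ^ k) :=
    (summable_geometric_of_lt_one hr0.le hr1).mul_left C
  have hsum : Summable (fun k : ℕ => Real.exp (α * (1 - (y - (k + 1 : ℝ) * lam) ^ 2))) := by
    apply Summable.of_nonneg_of_le (fun k => (Real.exp_pos _).le) hbound hsumg
  refine ⟨hsum, ?_⟩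
  have h1 : ∑' k : ℕ, Real.exp (α * (1 - (y - (k + 1 : ℝ) * lam) ^ 2)) ≤ ∑' k : ℕ, C * r ^ k :=
    Summable.tsum_le_tsum hbound hsum hsumg
  have h2 : ∑' k : ℕ, C * r ^ k = C / (1 - r) := by
    rw [tsum_mul_left, tsum_geometric_of_lt_one hr0.le hr1]
    ring
  have h3 : C / (1 - r) ≤ C * (2 - r) / (1 - r) := by
    apply div_le_div_of_nonneg_right ?_ (by linarith) |>.trans_eq rfl
    nlinarith
  calc _ ≤ C / (1 - r) := h1.trans h2.le
    _ ≤ C * (2 - r) / (1 - r) := h3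
end

section
/- Let λ > 0 and α > 0 be real numbers, and define C₁,λ(α) = exp(α) + 2·exp(α − αλ²/4) · (2 − exp(−αλ²)) / (1 − exp(−αλ²)). Then for every real y with |y| ≤ λ/2, the family (exp(α(1 − (y + kλ)²)))_{k ∈ ℤ} is summable and ∑_{k ∈ ℤ} exp(α(1 − (y + kλ)²)) ≤ C₁,λ(α); consequently sup_{|y| ≤ λ/2} ∑_{k ∈ ℤ} exp(α(1 − (y + kλ)²)) ≤ C₁,λ(α). -/
lemma stmt_2_aux (lam α : ℝ) (hlam : 0 < lam) (hα : 0 < α) (y : ℝ) (hy : |y| ≤ lam / 2) :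
    Summable (fun k : ℤ => Real.exp (α * (1 - (y + (k : ℝ) * lam) ^ 2))) ∧
    ∑' k : ℤ, Real.exp (α * (1 - (y + (k : ℝ) * lam) ^ 2)) ≤
      Real.exp α + 2 * Real.exp (α - α * lam ^ 2 / 4) *
        (2 - Real.exp (-(α * lam ^ 2))) / (1 - Real.exp (-(α * lam ^ 2))) := by
  set q := Real.exp (-(α * lam ^ 2)) with hqdef
  set c := Real.exp (α - α * lam ^ 2 / 4) with hcdef
  have hq0 : 0 < q := Real.exp_pos _
  have hc0 : 0 < c := Real.exp_pos _
  have hq1 : q < 1 := by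
    rw [hqdef, Real.exp_lt_one_iff]
    have : 0 < α * lam ^ 2 := by positivity
    linarith
  set g : ℕ → ℝ := fun n => Nat.casesOn n (Real.exp α) (fun m => c * q ^ m) with hgdef
  have hgs1 : Summable (fun m : ℕ => c * q ^ m) :=
    (summable_geometric_of_lt_one hq0.le hq1).mul_left c
  have hgs : Summable g := by
    rw [← summable_nat_add_iff 1]
    exact hgs1
  have hf_le : ∀ k : ℤ,
      Real.exp (α * (1 - (y + (k : ℝ) * lam) ^ 2)) ≤ g k.natAbs := by
    intro k
    cases hn : k.natAbs with
    | zero =>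
      have hk : k = 0 := Int.natAbs_eq_zero.mp hn
      subst hk
      simp only [hgdef, Int.cast_zero, zero_mul, add_zero]
      apply Real.exp_le_exp.mpr
      nlinarith [sq_nonneg y]
    | succ m =>
      have hkabs : |(k : ℝ)| = ((m : ℝ) + 1) := by
        rw [← Int.cast_abs, Int.abs_eq_natAbs, hn]
        push_cast; ring
      have h2 : |(k : ℝ) * lam| ≤ |y + (k : ℝ) * lam| + |y| := by
        calc |(k : ℝ) * lam| = |(y + (k : ℝ) * lam) + (-y)| := by congr 1; ring
        _ ≤ |y + (k : ℝ) * lam| + |-y| := abs_add_le _ _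
        _ = |y + (k : ℝ) * lam| + |y| := by rw [abs_neg]
      have h3 : ((m : ℝ) + 1) * lam - lam / 2 ≤ |y + (k : ℝ) * lam| := by
        rw [abs_mul, hkabs, abs_of_pos hlam] at h2
        linarith
      have hpos : (0:ℝ) ≤ ((m : ℝ) + 1) * lam - lam / 2 := by
        have : (0:ℝ) ≤ (m:ℝ) := Nat.cast_nonneg m
        nlinarith
      have h4 : (((m : ℝ) + 1) * lam - lam / 2) ^ 2 ≤ (y + (k : ℝ) * lam) ^ 2 := by
        rw [← sq_abs (y + (k : ℝ) * lam)]
        exact pow_le_pow_left₀ hpos h3 2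
      have hrhs : g (m + 1) = Real.exp ((α - α * lam ^ 2 / 4) + (m : ℝ) * (-(α * lam ^ 2))) := by
        simp only [hgdef]
        rw [Real.exp_add, Real.exp_nat_mul]
      rw [hrhs]
      apply Real.exp_le_exp.mpr
      have hm0 : (0:ℝ) ≤ (m:ℝ) := Nat.cast_nonneg m
      nlinarith [mul_le_mul_of_nonneg_left h4 hα.le, mul_pos hα (mul_pos hlam hlam),
        mul_nonneg (mul_nonneg hα.le (mul_nonneg hlam.le hlam.le)) hm0,
        mul_nonneg (mul_nonneg (mul_nonneg hα.le (mul_nonneg hlam.le hlam.le)) hm0) hm0]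
  have hfpos : ∀ k : ℤ, 0 ≤ Real.exp (α * (1 - (y + (k : ℝ) * lam) ^ 2)) :=
    fun k => (Real.exp_pos _).le
  have hhs : Summable (fun k : ℤ => g k.natAbs) := by
    apply Summable.of_nat_of_neg
    · exact hgs.congr fun n => by simp
    · exact hgs.congr fun n => by
        rw [show ((-(n : ℤ))).natAbs = n from by omega]
  have hfs : Summable (fun k : ℤ => Real.exp (α * (1 - (y + (k : ℝ) * lam) ^ 2))) :=
    Summable.of_nonneg_of_le hfpos hf_le hhs
  refine ⟨hfs, ?_⟩
  have hsum_h : ∑' k : ℤ, g k.natAbs = Real.exp α + 2 * (c * (1 - q)⁻¹) := by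
    rw [tsum_of_nat_of_neg_add_one (hgs.congr fun n => by simp)
      (hgs1.congr fun n => by rw [show ((-((n : ℤ) + 1))).natAbs = n + 1 from by omega])]
    have h1 : ∑' n : ℕ, g ((n : ℤ)).natAbs = Real.exp α + c * (1 - q)⁻¹ := by
      have : ∑' n : ℕ, g ((n : ℤ)).natAbs = ∑' n : ℕ, g n := by
        apply tsum_congr; intro n; simp
      rw [this, Summable.tsum_eq_zero_add hgs]
      congr 1
      simp only [hgdef]
      rw [tsum_mul_left, tsum_geometric_of_lt_one hq0.le hq1]
    have h2 : ∑' n : ℕ, g (-(n + 1) : ℤ).natAbs = c * (1 - q)⁻¹ := by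
      have he : ∑' n : ℕ, g (-(n + 1) : ℤ).natAbs = ∑' n : ℕ, c * q ^ n := by
        apply tsum_congr; intro n
        rw [show ((-(↑n + 1) : ℤ)).natAbs = n + 1 from by omega]
      rw [he, tsum_mul_left, tsum_geometric_of_lt_one hq0.le hq1]
    rw [h1, h2]
    ring
  calc ∑' k : ℤ, Real.exp (α * (1 - (y + (k : ℝ) * lam) ^ 2))
      ≤ ∑' k : ℤ, g k.natAbs := Summable.tsum_le_tsum hf_le hfs hhs
    _ = Real.exp α + 2 * (c * (1 - q)⁻¹) := hsum_h
    _ ≤ Real.exp α + 2 * c * (2 - q) / (1 - q) := by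
        have h1q : 0 < 1 - q := by linarith
        rw [div_eq_mul_inv]
        have : 2 * (c * (1 - q)⁻¹) = 2 * c * 1 * (1 - q)⁻¹ := by ring
        rw [this]
        have h2q : (1:ℝ) ≤ 2 - q := by linarith
        gcongr <;> first
          | positivity
          | linarith

/-- For λ > 0, α > 0 and C₁,λ(α) = exp(α) + 2·exp(α − αλ²/4)·(2 − exp(−αλ²))/(1 − exp(−αλ²)),
for every |y| ≤ λ/2 the family (exp(α(1 − (y + kλ)²)))_{k ∈ ℤ} is summable with sum ≤ C₁,λ(α);
consequently the supremum over |y| ≤ λ/2 of the sums is ≤ C₁,λ(α). -/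
theorem stmt_2 (lam α : ℝ) (hlam : 0 < lam) (hα : 0 < α) :
    (∀ y : ℝ, |y| ≤ lam / 2 →
      Summable (fun k : ℤ => Real.exp (α * (1 - (y + (k : ℝ) * lam) ^ 2))) ∧
      ∑' k : ℤ, Real.exp (α * (1 - (y + (k : ℝ) * lam) ^ 2)) ≤
        Real.exp α + 2 * Real.exp (α - α * lam ^ 2 / 4) *
          (2 - Real.exp (-(α * lam ^ 2))) / (1 - Real.exp (-(α * lam ^ 2)))) ∧
    ⨆ y ∈ {y : ℝ | |y| ≤ lam / 2},
        ∑' k : ℤ, Real.exp (α * (1 - (y + (k : ℝ) * lam) ^ 2)) ≤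
      Real.exp α + 2 * Real.exp (α - α * lam ^ 2 / 4) *
        (2 - Real.exp (-(α * lam ^ 2))) / (1 - Real.exp (-(α * lam ^ 2))) := by
  have hq1 : Real.exp (-(α * lam ^ 2)) < 1 := by
    rw [Real.exp_lt_one_iff]
    have : 0 < α * lam ^ 2 := by positivity
    linarith
  have hC0 : 0 ≤ Real.exp α + 2 * Real.exp (α - α * lam ^ 2 / 4) *
      (2 - Real.exp (-(α * lam ^ 2))) / (1 - Real.exp (-(α * lam ^ 2)))
     := by
    have h1q : 0 < 1 - Real.exp (-(α * lam ^ 2)) := by linarith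
    have h2q : (0:ℝ) < 2 - Real.exp (-(α * lam ^ 2)) := by linarith
    positivity
  refine ⟨fun y hy => stmt_2_aux lam α hlam hα y hy, ?_⟩
  apply Real.iSup_le _ hC0
  intro y
  apply Real.iSup_le _ hC0
  intro hy
  exact (stmt_2_aux lam α hlam hα y hy).2
end

section
/- Let λ > 0 and 0 < θ < 1, define w : ℂ → ℂ by w(θ) = 1 and w(z) = (λ/(2π)) · (exp((2π/λ)(z − θ)) − 1)/(z − θ) for z ≠ θ, and set m(λ) = (λ/(2π)) · (1 + exp(4π/λ)). Then for every z in the closed strip 𝕊 = {z ∈ ℂ : 0 ≤ Re z ≤ 1}, one has |w(z)| ≤ m(λ). -/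
open Complex

/-- For λ > 0, 0 < θ < 1, w as in the paper and m(λ) = (λ/(2π))·(1 + exp(4π/λ)),
one has |w(z)| ≤ m(λ) for every z in the closed strip 0 ≤ Re z ≤ 1. -/
theorem stmt_5 (lam θ : ℝ) (hlam : 0 < lam) (hθ0 : 0 < θ) (hθ1 : θ < 1)
    (w : ℂ → ℂ)
    (hwθ : w (θ : ℂ) = 1)
    (hw : ∀ z : ℂ, z ≠ (θ : ℂ) →
      w z = ((lam : ℂ) / (2 * Real.pi)) *
        (Complex.exp (((2 * Real.pi : ℝ) / lam : ℝ) * (z - (θ : ℂ))) - 1) / (z - (θ : ℂ))) :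
    ∀ z : ℂ, 0 ≤ z.re → z.re ≤ 1 →
      ‖w z‖ ≤ lam / (2 * Real.pi) * (1 + Real.exp (4 * Real.pi / lam)) := by
  intro z hz0 hz1
  have hπ := Real.pi_pos
  set c : ℝ := 2 * Real.pi / lam with hc
  have hcpos : 0 < c := by positivity
  have hE := Real.add_one_le_exp c
  have hE2 : Real.exp (2 * c) = Real.exp c * Real.exp c := by
    rw [← Real.exp_add]; ring_nf
  have hEpos := Real.exp_pos c
  have h4 : 4 * Real.pi / lam = 2 * c := by rw [hc]; field_simp; ring
  have hlam2 : lam / (2 * Real.pi) = 1 / c := by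
    rw [hc]; field_simp
  rw [h4, hlam2]
  -- the final bound target: 1/c * (1 + exp (2c))
  have hMbig : Real.exp c + 1 ≤ 1 / c * (1 + Real.exp (2 * c)) := by
    rw [hE2, div_mul_eq_mul_div, le_div_iff₀ hcpos]
    nlinarith [mul_le_mul_of_nonneg_right hE hEpos.le]
  have hM2 : (2 : ℝ) ≤ 1 / c * (1 + Real.exp (2 * c)) := by
    rw [div_mul_eq_mul_div, le_div_iff₀ hcpos]
    nlinarith [Real.add_one_le_exp (2 * c)]
  by_cases hzθ : z = (θ : ℂ)
  · rw [hzθ, hwθ]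
    simpa using le_trans (by norm_num) hM2
  · rw [hw z hzθ]
    set u : ℂ := z - (θ : ℂ) with hu
    have hu0 : u ≠ 0 := sub_ne_zero.mpr hzθ
    have huabs : 0 < ‖u‖ := norm_pos_iff.mpr hu0
    have hcoe : (((2 * Real.pi : ℝ) / lam : ℝ) : ℂ) = (c : ℂ) := by norm_num [hc]
    rw [hcoe]
    have habs : ‖(lam : ℂ) / (2 * Real.pi) * (Complex.exp ((c : ℂ) * u) - 1) / u‖
        = (1 / c) * ‖Complex.exp ((c : ℂ) * u) - 1‖ / ‖u‖ := by
      rw [norm_div, norm_mul]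
      congr 2
      have : ((lam : ℂ) / (2 * Real.pi)) = ((lam / (2 * Real.pi) : ℝ) : ℂ) := by
        push_cast; ring
      rw [this, Complex.norm_real, Real.norm_of_nonneg (by positivity), hlam2]
    rw [habs]
    by_cases hsm : ‖(c : ℂ) * u‖ ≤ 1
    · -- small case: |exp(cu) - 1| ≤ 2 c |u|
      have h1 := Complex.norm_exp_sub_one_le hsm
      have hcu : ‖(c : ℂ) * u‖ = c * ‖u‖ := by
        rw [norm_mul, Complex.norm_real, Real.norm_of_nonneg hcpos.le]
      refine le_trans ?_ hM2
      rw [div_le_iff₀ huabs]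
      calc (1 / c) * ‖Complex.exp ((c : ℂ) * u) - 1‖
          ≤ (1 / c) * (2 * (c * ‖u‖)) := by
            apply mul_le_mul_of_nonneg_left _ (by positivity)
            rw [← hcu]; exact h1
        _ = 2 * ‖u‖ := by field_simp
    · -- large case: |u| ≥ 1/c
      push_neg at hsm
      have hcu : ‖(c : ℂ) * u‖ = c * ‖u‖ := by
        rw [norm_mul, Complex.norm_real, Real.norm_of_nonneg hcpos.le]
      have hularge : 1 / c ≤ ‖u‖ := by
        rw [div_le_iff₀ hcpos]; rw [hcu] at hsm; linarith [hsm.le]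
      have hre : ((c : ℂ) * u).re ≤ c := by
        have : ((c : ℂ) * u).re = c * u.re := by simp [Complex.mul_re]
        rw [this]
        have : u.re = z.re - θ := by simp [hu]
        nlinarith
      have hexp : ‖Complex.exp ((c : ℂ) * u) - 1‖ ≤ Real.exp c + 1 := by
        have hsub := norm_sub_le (Complex.exp ((c : ℂ) * u)) 1
        simp only [norm_one] at hsub
        calc ‖Complex.exp ((c : ℂ) * u) - 1‖
            ≤ ‖Complex.exp ((c : ℂ) * u)‖ + 1 := hsub
          _ = Real.exp (((c : ℂ) * u).re) + 1 := by rw [Complex.norm_exp]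
          _ ≤ Real.exp c + 1 := by gcongr
      refine le_trans ?_ hMbig
      rw [div_le_iff₀ huabs]
      calc (1 / c) * ‖Complex.exp ((c : ℂ) * u) - 1‖
          ≤ (1 / c) * (Real.exp c + 1) := by
            apply mul_le_mul_of_nonneg_left hexp (by positivity)
        _ = (Real.exp c + 1) * (1 / c) := by ring
        _ ≤ (Real.exp c + 1) * ‖u‖ := by
            apply mul_le_mul_of_nonneg_left hularge (by positivity)
end

section
/- Let X be a complex Banach space, let λ > 0, α > 0, 0 < θ < 1, let g : ℂ → ℂ be entire with |g(z)| ≤ M for all z in the strip 𝕊 = {z ∈ ℂ : 0 ≤ Re z ≤ 1}, and let f : ℂ → X be continuous on 𝕊, analytic (complex differentiable) on the open strip 𝕊° = {z : 0 < Re z < 1}, and satisfy ‖f(z)‖ ≤ B for all z ∈ 𝕊. Define F_α(z) = ∑_{k ∈ ℤ} exp(α(z − θ + ikλ)²) · g(z + ikλ) · f(z + ikλ) for z ∈ 𝕊. Then F_α is analytic on the open strip 𝕊°. -/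
open Complex

lemma aux_summable (c t l : ℝ) (hc : 0 < c) (hl : 0 < l) :
    Summable fun k : ℤ => Real.exp (-(c * (t + k * l) ^ 2)) := by
  have key : ∀ u s : ℝ, -(c * (u + s) ^ 2) ≤ c * u ^ 2 - c * l ^ 2 / 2 * (s / l) ^ 2 := by
    intro t s
    have h1 : (s : ℝ) ^ 2 / 2 - t ^ 2 ≤ (t + s) ^ 2 := by nlinarith [sq_nonneg (t + s + t)]
    have h2 : c * l ^ 2 / 2 * (s / l) ^ 2 = c * s ^ 2 / 2 := by
      field_simp
    nlinarith
  have hr : Real.exp (-(c * l ^ 2 / 2)) < 1 := by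
    rw [Real.exp_lt_one_iff]
    have : (0:ℝ) < c * l ^ 2 / 2 := by positivity
    linarith
  have hr0 : (0:ℝ) ≤ Real.exp (-(c * l ^ 2 / 2)) := Real.exp_nonneg _
  have hnat : ∀ t' : ℝ, Summable fun n : ℕ => Real.exp (-(c * (t' + n * l) ^ 2)) := by
    intro t'
    refine Summable.of_nonneg_of_le (fun n => Real.exp_nonneg _) ?_
      (((summable_geometric_of_lt_one hr0 hr).mul_left (Real.exp (c * t' ^ 2))) :
        Summable fun n : ℕ => Real.exp (c * t' ^ 2) * Real.exp (-(c * l ^ 2 / 2)) ^ n)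
    intro n
    rw [← Real.exp_nat_mul, ← Real.exp_add]
    apply Real.exp_le_exp.mpr
    have := key t' ((n : ℝ) * l)
    have hnl : ((n : ℝ) * l / l) ^ 2 = (n : ℝ) ^ 2 := by
      field_simp
    rw [hnl] at this
    have hn2 : (n : ℝ) ≤ (n : ℝ) ^ 2 := by
      exact_mod_cast Nat.le_self_pow two_ne_zero n
    nlinarith [mul_le_mul_of_nonneg_left hn2 (le_of_lt (by positivity : (0:ℝ) < c * l ^ 2 / 2))]
  apply Summable.of_nat_of_neg
  · exact hnat t
  · have := hnat (-t)
    apply this.congr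
    intro n
    congr 1
    have : -t + n * l = -(t + (-(n:ℝ)) * l) := by ring
    rw [this]
    push_cast
    ring_nf

/-- With X a complex Banach space, λ, α > 0, 0 < θ < 1, g entire with |g| ≤ M on
the strip 𝕊 = {0 ≤ Re z ≤ 1}, and f continuous on 𝕊, complex differentiable on the open strip
and with ‖f‖ ≤ B on 𝕊, the function F_α(z) = ∑_{k ∈ ℤ} exp(α(z − θ + ikλ)²)·g(z + ikλ)·f(z + ikλ)
is analytic on the open strip 0 < Re z < 1. -/
theorem stmt_8 {X : Type*} [NormedAddCommGroup X] [NormedSpace ℂ X] [CompleteSpace X]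
    (lam α θ : ℝ) (hlam : 0 < lam) (hα : 0 < α) (hθ0 : 0 < θ) (hθ1 : θ < 1)
    (g : ℂ → ℂ) (hg : Differentiable ℂ g)
    (M : ℝ) (hgM : ∀ z : ℂ, 0 ≤ z.re → z.re ≤ 1 → ‖g z‖ ≤ M)
    (f : ℂ → X)
    (hfc : ContinuousOn f {z : ℂ | 0 ≤ z.re ∧ z.re ≤ 1})
    (hfd : ∀ z : ℂ, 0 < z.re → z.re < 1 → DifferentiableAt ℂ f z)
    (B : ℝ) (hfB : ∀ z : ℂ, 0 ≤ z.re → z.re ≤ 1 → ‖f z‖ ≤ B) :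
    ∀ z : ℂ, 0 < z.re → z.re < 1 →
      DifferentiableAt ℂ (fun w : ℂ => ∑' k : ℤ,
        (Complex.exp ((α : ℂ) * (w - (θ : ℂ) + (k : ℂ) * (lam : ℂ) * Complex.I) ^ 2) *
          g (w + (k : ℂ) * (lam : ℂ) * Complex.I)) •
            f (w + (k : ℂ) * (lam : ℂ) * Complex.I)) z := by
  intro z hz0 hz1
  have hM0 : 0 ≤ M := le_trans (norm_nonneg _) (hgM 0 (by simp) (by simp))
  have hB0 : 0 ≤ B := le_trans (norm_nonneg _) (hfB 0 (by simp) (by simp))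
  set U : Set ℂ := {w : ℂ | 0 < w.re ∧ w.re < 1 ∧ |w.im - z.im| < 1} with hUdef
  have hUopen : IsOpen U := by
    have h1 : IsOpen {w : ℂ | 0 < w.re} := isOpen_lt continuous_const Complex.continuous_re
    have h2 : IsOpen {w : ℂ | w.re < 1} := isOpen_lt Complex.continuous_re continuous_const
    have h3 : IsOpen {w : ℂ | |w.im - z.im| < 1} :=
      isOpen_lt (continuous_abs.comp (Complex.continuous_im.sub continuous_const))
        continuous_const
    exact h1.inter (h2.inter h3)
  have hzU : z ∈ U := ⟨hz0, hz1, by simp⟩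
  set u : ℤ → ℝ := fun k =>
    Real.exp (α * 2) * Real.exp (-(α / 2 * (z.im + k * lam) ^ 2)) * (M * B) with hudef
  have hu : Summable u :=
    ((aux_summable (α / 2) z.im lam (by positivity) hlam).mul_left _).mul_right _
  have hre : ∀ (k : ℤ) (w : ℂ), (w + (k : ℂ) * (lam : ℂ) * Complex.I).re = w.re := by
    intro k w
    simp
  have hdiff : ∀ k : ℤ, DifferentiableOn ℂ (fun w : ℂ =>
      (Complex.exp ((α : ℂ) * (w - (θ : ℂ) + (k : ℂ) * (lam : ℂ) * Complex.I) ^ 2) *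
        g (w + (k : ℂ) * (lam : ℂ) * Complex.I)) •
          f (w + (k : ℂ) * (lam : ℂ) * Complex.I)) U := by
    intro k w hw
    apply DifferentiableAt.differentiableWithinAt
    have hadd : DifferentiableAt ℂ (fun w : ℂ => w + (k : ℂ) * (lam : ℂ) * Complex.I) w :=
      differentiableAt_id.add_const _
    have h1 : DifferentiableAt ℂ
        (fun w : ℂ => Complex.exp ((α : ℂ) * (w - (θ : ℂ) + (k : ℂ) * (lam : ℂ) * Complex.I) ^ 2))
        w :=
      ((((differentiableAt_id.sub_const _).add_const _).pow 2).const_mul _).cexp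
    have h2 : DifferentiableAt ℂ (fun w : ℂ => g (w + (k : ℂ) * (lam : ℂ) * Complex.I)) w :=
      (hg _).comp w hadd
    have h3 : DifferentiableAt ℂ (fun w : ℂ => f (w + (k : ℂ) * (lam : ℂ) * Complex.I)) w := by
      refine DifferentiableAt.comp w (hfd _ ?_ ?_) hadd
      · rw [hre]; exact hw.1
      · rw [hre]; exact hw.2.1
    exact (h1.mul h2).smul h3
  have hbound : ∀ (k : ℤ) (w : ℂ), w ∈ U →
      ‖(Complex.exp ((α : ℂ) * (w - (θ : ℂ) + (k : ℂ) * (lam : ℂ) * Complex.I) ^ 2) *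
        g (w + (k : ℂ) * (lam : ℂ) * Complex.I)) •
          f (w + (k : ℂ) * (lam : ℂ) * Complex.I)‖ ≤ u k := by
    intro k w hw
    obtain ⟨hw1, hw2, hw3⟩ := hw
    rw [norm_smul, norm_mul]
    have hexpre : ((α : ℂ) * (w - (θ : ℂ) + (k : ℂ) * (lam : ℂ) * Complex.I) ^ 2).re =
        α * ((w.re - θ) ^ 2 - (w.im + k * lam) ^ 2) := by
      simp [Complex.mul_re, Complex.mul_im, Complex.add_re, Complex.add_im, Complex.sub_re,
        Complex.sub_im, sq]
    have hd := abs_lt.mp hw3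
    have hA : ‖Complex.exp ((α : ℂ) * (w - (θ : ℂ) + (k : ℂ) * (lam : ℂ) * Complex.I) ^ 2)‖ ≤
        Real.exp (α * 2) * Real.exp (-(α / 2 * (z.im + k * lam) ^ 2)) := by
      rw [Complex.norm_exp, hexpre, ← Real.exp_add]
      apply Real.exp_le_exp.mpr
      have hsq1 : (w.re - θ) ^ 2 ≤ 1 := by nlinarith
      have hsq2 : ((z.im : ℝ) + k * lam) ^ 2 / 2 - 1 ≤ (w.im + k * lam) ^ 2 := by
        nlinarith [sq_nonneg ((z.im : ℝ) + k * lam + 2 * (w.im - z.im))]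
      nlinarith
    have hG : ‖g (w + (k : ℂ) * (lam : ℂ) * Complex.I)‖ ≤ M := by
      exact hgM _ (by rw [hre]; exact hw1.le) (by rw [hre]; exact hw2.le)
    have hF : ‖f (w + (k : ℂ) * (lam : ℂ) * Complex.I)‖ ≤ B := by
      exact hfB _ (by rw [hre]; exact hw1.le) (by rw [hre]; exact hw2.le)
    calc ‖Complex.exp ((α : ℂ) * (w - (θ : ℂ) + (k : ℂ) * (lam : ℂ) * Complex.I) ^ 2)‖ *
          ‖g (w + (k : ℂ) * (lam : ℂ) * Complex.I)‖ *
          ‖f (w + (k : ℂ) * (lam : ℂ) * Complex.I)‖ ≤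
        (Real.exp (α * 2) * Real.exp (-(α / 2 * (z.im + k * lam) ^ 2))) * M * B := by
          gcongr <;> positivity
      _ = u k := by rw [hudef]; ring
  have := differentiableOn_tsum_of_summable_norm hu hdiff hUopen hbound
  exact this.differentiableAt (hUopen.mem_nhds hzU)
end

section
/- Let X be a complex Banach space, let λ > 0, α > 0, 0 < θ < 1, let g : ℂ → ℂ be entire with |g(z)| ≤ M for all z in the strip 𝕊 = {z ∈ ℂ : 0 ≤ Re z ≤ 1}, and let f : ℂ → X satisfy ‖f(z)‖ ≤ B for all z ∈ 𝕊. Define F_α(z) = ∑_{k ∈ ℤ} exp(α(z − θ + ikλ)²) · g(z + ikλ) · f(z + ikλ), and set C₁,λ(α) = exp(α) + 2·exp(α − αλ²/4) · (2 − exp(−αλ²)) / (1 − exp(−αλ²)). Then for each j ∈ {0, 1} and each real y with |y| ≤ λ/2, if B_j is an upper bound for ‖f(j + it)‖ over all t ∈ ℝ, then ‖F_α(j + iy)‖ ≤ C₁,λ(α) · M · B_j. -/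
open Complex

lemma aux_stmt11 (α lam y n : ℝ) (hα : 0 < α) (hlam : 0 < lam) (hn : 0 ≤ n)
    (hy1 : -(lam/2) ≤ y) :
    α - α * (y + (n+1) * lam) ^ 2 ≤ α - α * lam ^ 2 / 4 + n * (-(α * lam ^ 2)) := by
  have hs : (n + 1/2) * lam ≤ y + (n+1) * lam := by nlinarith
  have hs0 : (0:ℝ) ≤ (n + 1/2) * lam := by positivity
  have hsq : ((n + 1/2) * lam) * ((n + 1/2) * lam) ≤ (y + (n+1)*lam) * (y + (n+1)*lam) :=
    mul_self_le_mul_self hs0 hs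
  nlinarith [mul_nonneg hα.le (sub_nonneg.mpr hsq), mul_nonneg hα.le (sq_nonneg (n * lam))]

set_option maxHeartbeats 1000000 in
/-- With X a complex Banach space, λ, α > 0, 0 < θ < 1, g entire with |g| ≤ M on
the strip 𝕊 = {0 ≤ Re z ≤ 1}, f : ℂ → X with ‖f‖ ≤ B on 𝕊, and
F_α(z) = ∑_{k ∈ ℤ} exp(α(z − θ + ikλ)²)·g(z + ikλ)·f(z + ikλ): for j ∈ {0,1} and |y| ≤ λ/2,
if ‖f(j + it)‖ ≤ B_j for all t ∈ ℝ, then ‖F_α(j + iy)‖ ≤ C₁,λ(α)·M·B_j, where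
C₁,λ(α) = exp(α) + 2·exp(α − αλ²/4)·(2 − exp(−αλ²))/(1 − exp(−αλ²)). -/
theorem stmt_11 {X : Type*} [NormedAddCommGroup X] [NormedSpace ℂ X] [CompleteSpace X]
    (lam α θ : ℝ) (hlam : 0 < lam) (hα : 0 < α) (hθ0 : 0 < θ) (hθ1 : θ < 1)
    (g : ℂ → ℂ) (hg : Differentiable ℂ g)
    (M : ℝ) (hgM : ∀ z : ℂ, 0 ≤ z.re → z.re ≤ 1 → ‖g z‖ ≤ M)
    (f : ℂ → X) (B : ℝ) (hfB : ∀ z : ℂ, 0 ≤ z.re → z.re ≤ 1 → ‖f z‖ ≤ B)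
    (j : ℝ) (hj : j = 0 ∨ j = 1)
    (Bj : ℝ) (hBj : ∀ t : ℝ, ‖f ((j : ℂ) + (t : ℂ) * Complex.I)‖ ≤ Bj)
    (y : ℝ) (hy : |y| ≤ lam / 2) :
    ‖∑' k : ℤ,
        (Complex.exp ((α : ℂ) *
            (((j : ℂ) + (y : ℂ) * Complex.I) - (θ : ℂ) + (k : ℂ) * (lam : ℂ) * Complex.I) ^ 2) *
          g (((j : ℂ) + (y : ℂ) * Complex.I) + (k : ℂ) * (lam : ℂ) * Complex.I)) •
            f (((j : ℂ) + (y : ℂ) * Complex.I) + (k : ℂ) * (lam : ℂ) * Complex.I)‖ ≤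
      (Real.exp α + 2 * Real.exp (α - α * lam ^ 2 / 4) *
        (2 - Real.exp (-(α * lam ^ 2))) / (1 - Real.exp (-(α * lam ^ 2)))) * M * Bj := by
  obtain ⟨hy1, hy2⟩ := abs_le.mp hy
  have hM : 0 ≤ M := le_trans (norm_nonneg _) (hgM 0 (by norm_num) (by norm_num))
  have hBj0 : 0 ≤ Bj := le_trans (norm_nonneg _) (hBj 0)
  set q : ℝ := α * lam ^ 2 with hq
  have hq0 : 0 < q := by positivity
  set r : ℝ := Real.exp (-q) with hrdef
  have hr0 : 0 < r := Real.exp_pos _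
  have hr1 : r < 1 := by
    rw [hrdef]
    exact Real.exp_lt_one_iff.mpr (by linarith)
  set A : ℝ := Real.exp (α - q / 4) with hA
  have hA0 : 0 < A := Real.exp_pos _
  -- the majorant
  set u : ℤ → ℝ := fun k => Real.exp (α - α * (y + (k : ℝ) * lam) ^ 2) with hu
  set T : ℤ → X := fun k =>
      (Complex.exp ((α : ℂ) *
          (((j : ℂ) + (y : ℂ) * Complex.I) - (θ : ℂ) + (k : ℂ) * (lam : ℂ) * Complex.I) ^ 2) *
        g (((j : ℂ) + (y : ℂ) * Complex.I) + (k : ℂ) * (lam : ℂ) * Complex.I)) •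
          f (((j : ℂ) + (y : ℂ) * Complex.I) + (k : ℂ) * (lam : ℂ) * Complex.I) with hT
  -- termwise bound
  have hterm : ∀ k : ℤ, ‖T k‖ ≤ M * Bj * u k := by
    intro k
    have hw : ((j : ℂ) + (y : ℂ) * Complex.I) - (θ : ℂ) + (k : ℂ) * (lam : ℂ) * Complex.I
        = ((j - θ : ℝ) : ℂ) + ((y + (k : ℝ) * lam : ℝ) : ℂ) * Complex.I := by
      push_cast; ring
    have hz : ((j : ℂ) + (y : ℂ) * Complex.I) + (k : ℂ) * (lam : ℂ) * Complex.I
        = (j : ℂ) + ((y + (k : ℝ) * lam : ℝ) : ℂ) * Complex.I := by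
      push_cast; ring
    have hre : ((α : ℂ) * (((j : ℂ) + (y : ℂ) * Complex.I) - (θ : ℂ)
        + (k : ℂ) * (lam : ℂ) * Complex.I) ^ 2).re
        = α * ((j - θ) ^ 2 - (y + (k : ℝ) * lam) ^ 2) := by
      rw [hw]
      simp [pow_two, Complex.mul_re, Complex.mul_im, Complex.add_re, Complex.add_im]
    have hgre : (((j : ℂ) + (y : ℂ) * Complex.I) + (k : ℂ) * (lam : ℂ) * Complex.I).re = j := by
      rw [hz]; simp
    have hgb : ‖g (((j : ℂ) + (y : ℂ) * Complex.I)
        + (k : ℂ) * (lam : ℂ) * Complex.I)‖ ≤ M := by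
      apply hgM
      · rw [hgre]; rcases hj with h | h <;> rw [h] <;> norm_num
      · rw [hgre]; rcases hj with h | h <;> rw [h] <;> norm_num
    have hfb : ‖f (((j : ℂ) + (y : ℂ) * Complex.I) + (k : ℂ) * (lam : ℂ) * Complex.I)‖ ≤ Bj := by
      rw [hz]; exact hBj (y + (k : ℝ) * lam)
    have habs : ‖Complex.exp ((α : ℂ) * (((j : ℂ) + (y : ℂ) * Complex.I) - (θ : ℂ)
        + (k : ℂ) * (lam : ℂ) * Complex.I) ^ 2)‖
        = Real.exp (α * ((j - θ) ^ 2 - (y + (k : ℝ) * lam) ^ 2)) := by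
      rw [Complex.norm_exp, hre]
    have hexple : Real.exp (α * ((j - θ) ^ 2 - (y + (k : ℝ) * lam) ^ 2)) ≤ u k := by
      rw [hu]
      apply Real.exp_le_exp.mpr
      have hjθ : (j - θ) ^ 2 ≤ 1 := by
        rcases hj with h | h <;> rw [h] <;> nlinarith
      nlinarith
    rw [hT]
    simp only [norm_smul, norm_mul]
    calc ‖(_ : ℂ)‖ * ‖(_ : ℂ)‖ * ‖f _‖
        ≤ u k * M * Bj := by
          apply mul_le_mul _ hfb (norm_nonneg _) (by positivity)
          exact mul_le_mul (habs ▸ hexple) hgb (norm_nonneg _) (Real.exp_pos _).le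
      _ = M * Bj * u k := by ring
  -- bounds on the majorant
  have hAr : ∀ n : ℕ, A * r ^ n = Real.exp (α - q / 4 + (n : ℝ) * (-q)) := by
    intro n
    rw [hA, hrdef, Real.exp_add, ← Real.exp_nat_mul]
  have hun : ∀ n : ℕ, u ((n : ℤ) + 1) ≤ A * r ^ n := by
    intro n
    rw [hAr n, hu]
    apply Real.exp_le_exp.mpr
    push_cast
    rw [hq]
    exact aux_stmt11 α lam y n hα hlam (Nat.cast_nonneg n) hy1
  have hun' : ∀ n : ℕ, u (-((n : ℤ) + 1)) ≤ A * r ^ n := by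
    intro n
    rw [hAr n, hu]
    apply Real.exp_le_exp.mpr
    push_cast
    rw [hq]
    have hrw : (y + (-((n:ℝ) + 1)) * lam) ^ 2 = ((-y) + ((n:ℝ)+1) * lam) ^ 2 := by ring
    rw [hrw]
    exact aux_stmt11 α lam (-y) n hα hlam (Nat.cast_nonneg n) (by linarith)
  have hgeo : Summable (fun n : ℕ => A * r ^ n) :=
    (summable_geometric_of_lt_one hr0.le hr1).mul_left A
  have hsum_pos : Summable (fun n : ℕ => u ((n : ℤ) + 1)) :=
    Summable.of_nonneg_of_le (fun n => (Real.exp_pos _).le) hun hgeo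
  have hsum_nat : Summable (fun n : ℕ => u (n : ℤ)) := by
    rw [← summable_nat_add_iff 1]
    exact hsum_pos.congr (fun n => by push_cast; ring_nf)
  have hsum_neg : Summable (fun n : ℕ => u (-((n : ℤ) + 1))) :=
    Summable.of_nonneg_of_le (fun n => (Real.exp_pos _).le) hun' hgeo
  have husum : Summable u := Summable.of_nat_of_neg_add_one hsum_nat hsum_neg
  -- bound the tsum of the majorant
  have hgeosum : ∑' n : ℕ, A * r ^ n = A * (1 - r)⁻¹ := by
    rw [tsum_mul_left, tsum_geometric_of_lt_one hr0.le hr1]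
  have htsum_pos : ∑' n : ℕ, u ((n : ℤ) + 1) ≤ A * (1 - r)⁻¹ := by
    rw [← hgeosum]; exact Summable.tsum_le_tsum hun hsum_pos hgeo
  have htsum_neg : ∑' n : ℕ, u (-((n : ℤ) + 1)) ≤ A * (1 - r)⁻¹ := by
    rw [← hgeosum]; exact Summable.tsum_le_tsum hun' hsum_neg hgeo
  have hu0 : u 0 ≤ Real.exp α := by
    rw [hu]
    apply Real.exp_le_exp.mpr
    nlinarith [sq_nonneg y]
  have htsum_nat : ∑' n : ℕ, u (n : ℤ) ≤ Real.exp α + A * (1 - r)⁻¹ := by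
    rw [Summable.tsum_eq_zero_add hsum_nat]
    have heq : ∑' n : ℕ, u (((n + 1 : ℕ) : ℤ)) = ∑' n : ℕ, u ((n : ℤ) + 1) :=
      tsum_congr (fun n => by norm_cast)
    rw [heq]
    have h0 : u ((0 : ℕ) : ℤ) = u 0 := by norm_num
    rw [h0]
    linarith
  have htsum_u : ∑' k : ℤ, u k ≤ Real.exp α + 2 * (A * (1 - r)⁻¹) := by
    rw [tsum_of_nat_of_neg_add_one hsum_nat hsum_neg]
    linarith
  -- assemble
  have hnormsum : Summable (fun k : ℤ => ‖T k‖) :=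
    Summable.of_nonneg_of_le (fun k => norm_nonneg _) hterm (husum.mul_left (M * Bj))
  calc ‖∑' k : ℤ, T k‖ ≤ ∑' k : ℤ, ‖T k‖ := norm_tsum_le_tsum_norm hnormsum
    _ ≤ ∑' k : ℤ, M * Bj * u k :=
        Summable.tsum_le_tsum hterm hnormsum (husum.mul_left (M * Bj))
    _ = M * Bj * ∑' k : ℤ, u k := tsum_mul_left
    _ ≤ M * Bj * (Real.exp α + 2 * (A * (1 - r)⁻¹)) := by
        apply mul_le_mul_of_nonneg_left htsum_u (by positivity)
    _ ≤ (Real.exp α + 2 * Real.exp (α - α * lam ^ 2 / 4) *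
        (2 - Real.exp (-(α * lam ^ 2))) / (1 - Real.exp (-(α * lam ^ 2)))) * M * Bj := by
        have h1r : 0 < 1 - r := by linarith
        have key : Real.exp α + 2 * (A * (1 - r)⁻¹)
            ≤ Real.exp α + 2 * A * (2 - r) / (1 - r) := by
          rw [div_eq_mul_inv]
          have h2r : (1 : ℝ) ≤ 2 - r := by linarith
          have hAA : A ≤ A * (2 - r) := le_mul_of_one_le_right hA0.le h2r
          have hmul : A * (1 - r)⁻¹ ≤ (A * (2 - r)) * (1 - r)⁻¹ :=
            mul_le_mul_of_nonneg_right hAA (inv_nonneg.mpr h1r.le)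
          linarith
        have hAeq : Real.exp (α - α * lam ^ 2 / 4) = A := by rw [hA, hq]
        rw [hAeq]
        calc M * Bj * (Real.exp α + 2 * (A * (1 - r)⁻¹))
            ≤ M * Bj * (Real.exp α + 2 * A * (2 - r) / (1 - r)) :=
              mul_le_mul_of_nonneg_left key (by positivity)
          _ = (Real.exp α + 2 * A * (2 - r) / (1 - r)) * M * Bj := by ring
end
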